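/- Let α be an even positive integer and M_α the tensor with entries (M_α)_{j₁,…,j_α} = (1/α!)·Σ_{σ∈S_α} Π_{k=1}^{α/2} δ_{j_{σ(2k-1)}, j_{σ(2k)}} with indices in {1,2,3}. Then the squared Frobenius norm ‖M_α‖² = Σ_{j₁,…,j_α} (M_α)²_{j₁,…,j_α} equals α + 1. -/

import Mathlib

open Finset Equiv Nat
section CNT

open Finset Equiv Nat

variable {α ι : Type*} [Fintype α] [DecidableEq α] [Fintype ι] [DecidableEq ι]

/-- fiber card -/
def fc (f : α → ι) (i : ι) : ℕ := (univ.filter (fun a => f a = i)).card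

lemma fc_eq_card (f : α → ι) (i : ι) : fc f i = Fintype.card {a // f a = i} :=
  (Fintype.card_subtype _).symm

lemma fc_comp_perm (f : α → ι) (σ : Perm α) (i : ι) : fc (f ∘ σ) i = fc f i := by
  rw [fc_eq_card, fc_eq_card]
  exact Fintype.card_congr (σ.subtypeEquiv (fun a => Iff.rfl))

lemma exists_perm_of_fc (f g : α → ι) (h : ∀ i, fc f i = fc g i) :
    ∃ σ : Perm α, f ∘ σ = g := by
  have h' : ∀ i, Fintype.card {a // g a = i} = Fintype.card {a // f a = i} := by
    intro i; rw [← fc_eq_card, ← fc_eq_card, h]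
  let e : ∀ i, {a // g a = i} ≃ {a // f a = i} := fun i => Fintype.equivOfCardEq (h' i)
  refine ⟨(Equiv.sigmaFiberEquiv g).symm.trans ((Equiv.sigmaCongrRight e).trans
    (Equiv.sigmaFiberEquiv f)), ?_⟩
  funext a
  simp only [Function.comp_apply, Equiv.trans_apply, Equiv.sigmaFiberEquiv,
    Equiv.sigmaCongrRight, Equiv.coe_fn_symm_mk, Equiv.coe_fn_mk]
  exact (e (g a) ⟨a, rfl⟩).2

lemma mem_orbit_iff_fc (f g : α → ι) :
    g ∈ univ.image (fun σ : Perm α => f ∘ σ) ↔ ∀ i, fc g i = fc f i := by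
  constructor
  · rintro hg i
    rw [mem_image] at hg
    obtain ⟨σ, -, rfl⟩ := hg
    exact fc_comp_perm f σ i
  · intro h
    obtain ⟨σ, hσ⟩ := exists_perm_of_fc f g (fun i => (h i).symm)
    exact mem_image.2 ⟨σ, mem_univ _, hσ⟩

lemma card_fiber_perm (f g : α → ι) (hg : g ∈ univ.image (fun σ : Perm α => f ∘ σ)) :
    (univ.filter (fun σ : Perm α => f ∘ σ = g)).card = ∏ i, (fc f i)! := by
  rw [mem_image] at hg
  obtain ⟨σ₀, -, rfl⟩ := hg
  have : (univ.filter (fun σ : Perm α => f ∘ σ = f ∘ σ₀)).card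
      = (univ.filter (fun σ : Perm α => f ∘ σ = f)).card := by
    apply Finset.card_nbij' (fun σ => σ * σ₀⁻¹) (fun τ => τ * σ₀)
    · intro σ hσ
      simp only [mem_coe, coe_filter, Set.mem_setOf_eq, mem_filter, mem_univ, true_and] at hσ ⊢
      funext x
      have := congrFun hσ (σ₀⁻¹ x)
      simpa using this
    · intro τ hτ
      simp only [mem_coe, coe_filter, Set.mem_setOf_eq, mem_filter, mem_univ, true_and] at hτ ⊢
      funext x
      have := congrFun hτ (σ₀ x)
      simpa using this
    · intro σ _; simp [mul_assoc]
    · intro τ _; simp [mul_assoc]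
  rw [this]
  have h2 := DomMulAct.stabilizer_card f
  rw [Fintype.card_subtype] at h2
  rw [h2]
  exact Finset.prod_congr rfl (fun i _ => by rw [fc_eq_card])

lemma orbit_card_mul (f : α → ι) :
    (univ.image (fun σ : Perm α => f ∘ σ)).card * ∏ i, (fc f i)! = (Fintype.card α)! := by
  rw [← Fintype.card_perm, ← Finset.card_univ]
  rw [Finset.card_eq_sum_card_fiberwise
    (f := fun σ : Perm α => f ∘ σ) (t := univ.image (fun σ : Perm α => f ∘ σ))
    (fun σ _ => mem_image_of_mem _ (mem_univ σ))]
  rw [Finset.sum_congr rfl (fun g hg => card_fiber_perm f g hg), Finset.sum_const, smul_eq_mul]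
end CNT

open Finset

local notation "cb" => Nat.centralBinom

lemma sym_weight (N : ℕ) (f : ℕ → ℝ) (hf : ∀ i, i ≤ N → f i = f (N - i)) :
    ∑ i ∈ range (N + 1), ((2 * i : ℕ) : ℝ) * f i = N * ∑ i ∈ range (N + 1), f i := by
  have h1 : ∑ i ∈ range (N + 1), ((2 * i : ℕ) : ℝ) * f i
      = ∑ i ∈ range (N + 1), ((2 * (N - i) : ℕ) : ℝ) * f (N - i) := by
    rw [← Finset.sum_range_reflect]
    apply Finset.sum_congr rfl
    intro i hi
    rw [mem_range] at hi
    congr 2 <;> omega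
  have h2 : ∑ i ∈ range (N + 1), (((2 * i : ℕ) : ℝ) * f i + ((2 * (N - i) : ℕ) : ℝ) * f (N - i))
      = 2 * ∑ i ∈ range (N + 1), ((2 * i : ℕ) : ℝ) * f i := by
    rw [Finset.sum_add_distrib, ← h1]; ring
  have h3 : ∀ i ∈ range (N + 1),
      ((2 * i : ℕ) : ℝ) * f i + ((2 * (N - i) : ℕ) : ℝ) * f (N - i) = 2 * N * f i := by
    intro i hi
    rw [mem_range] at hi
    rw [← hf i (by omega)]
    have : ((2 * (N - i) : ℕ) : ℝ) = 2 * N - 2 * i := by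
      push_cast [Nat.cast_sub (by omega : i ≤ N)]; ring
    push_cast [this]
    ring
  rw [Finset.sum_congr rfl h3] at h2
  rw [← Finset.mul_sum] at h2
  linarith [h2]

lemma cb_succ_real (i : ℕ) : ((i:ℝ) + 1) * cb (i + 1) = 2 * (2 * i + 1) * cb i := by
  have := Nat.succ_mul_centralBinom_succ i
  have := congrArg (fun n : ℕ => (n : ℝ)) this
  push_cast at this
  linarith [this]

lemma cb_conv (n : ℕ) :
    ∑ i ∈ range (n + 1), (cb i : ℝ) * cb (n - i) = 4 ^ n := by
  induction n with
  | zero => simp [Nat.centralBinom]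
  | succ N IH =>
    have key := sym_weight (N+1) (fun i => (cb i : ℝ) * cb (N + 1 - i)) ?_
    swap
    · intro i hi
      rw [show N + 1 - (N + 1 - i) = i by omega, mul_comm]
    -- LHS of key: drop i = 0
    have lhs : ∑ i ∈ range (N + 2), ((2 * i : ℕ) : ℝ) * ((cb i : ℝ) * cb (N + 1 - i))
        = 4 * (N + 1) * 4 ^ N := by
      rw [Finset.sum_range_succ']
      simp only [Nat.mul_zero, Nat.cast_zero, zero_mul, add_zero]
      have : ∀ i ∈ range (N + 1), ((2 * (i+1) : ℕ) : ℝ) * ((cb (i+1) : ℝ) * cb (N + 1 - (i+1)))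
          = 4 * (((2 * i : ℕ) : ℝ) * ((cb i : ℝ) * cb (N - i))) + 4 * ((cb i : ℝ) * cb (N - i)) := by
        intro i _
        have h := cb_succ_real i
        have hN : N + 1 - (i + 1) = N - i := by omega
        rw [hN]
        push_cast
        nlinarith [h]
      rw [Finset.sum_congr rfl this, Finset.sum_add_distrib, ← Finset.mul_sum, ← Finset.mul_sum,
        sym_weight N (fun i => (cb i : ℝ) * cb (N - i)) (fun i hi => by
          rw [show N - (N - i) = i by omega, mul_comm]), IH]
      ring
    rw [lhs] at key
    have hpos : ((N:ℝ) + 1) ≠ 0 := by positivity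
    have : ((N + 1 : ℕ) : ℝ) * ∑ i ∈ range (N + 2), (cb i : ℝ) * cb (N + 1 - i)
        = ((N+1:ℕ):ℝ) * 4 ^ (N + 1) := by
      rw [← key]; push_cast; ring
    have := mul_left_cancel₀ (by positivity : ((N+1:ℕ):ℝ) ≠ 0) this
    exact this

lemma cb_four (m : ℕ) :
    ∑ i ∈ range (m + 1), (cb i : ℝ) * 4 ^ (m - i) = (2 * m + 1) * cb m := by
  induction m with
  | zero => simp [Nat.centralBinom]
  | succ M IH =>
    rw [Finset.sum_range_succ]
    have : ∀ i ∈ range (M + 1), (cb i : ℝ) * 4 ^ (M + 1 - i) = 4 * ((cb i : ℝ) * 4 ^ (M - i)) := by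
      intro i hi; rw [mem_range] at hi
      rw [show M + 1 - i = (M - i) + 1 by omega]; ring
    rw [Finset.sum_congr rfl this, ← Finset.mul_sum, IH]
    have h := cb_succ_real M
    have h2 : (4:ℝ) * ((2*(M:ℝ)+1) * cb M) = 2 * (((M:ℝ)+1) * cb (M+1)) := by
      rw [h]; ring
    rw [Nat.sub_self, pow_zero, mul_one]
    push_cast
    push_cast at h2
    linarith [h2]


open Finset Equiv Nat

/-- The invariant symmetric tensor `M_α` for `α = 2*m`. -/
noncomputable def Msymm (m : ℕ) : (Fin (2 * m) → Fin 3) → ℝ := fun j =>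
  (1 / (Nat.factorial (2 * m) : ℝ)) *
    ∑ σ : Equiv.Perm (Fin (2 * m)), ∏ k : Fin m,
      if j (σ ⟨2 * (k : ℕ), by have := k.isLt; omega⟩) =
          j (σ ⟨2 * (k : ℕ) + 1, by have := k.isLt; omega⟩) then (1 : ℝ) else 0

variable {m : ℕ}

def e0 (m : ℕ) (k : Fin m) : Fin (2 * m) := ⟨2 * (k : ℕ), by have := k.isLt; omega⟩
def e1 (m : ℕ) (k : Fin m) : Fin (2 * m) := ⟨2 * (k : ℕ) + 1, by have := k.isLt; omega⟩

noncomputable def paired (m : ℕ) (q : Fin (2 * m) → Fin 3) : ℝ :=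
  ∏ k : Fin m, if q (e0 m k) = q (e1 m k) then (1 : ℝ) else 0

lemma Msymm_eq (j : Fin (2 * m) → Fin 3) :
    Msymm m j = (1 / ((2 * m)! : ℝ)) * ∑ σ : Perm (Fin (2 * m)), paired m (j ∘ σ) := rfl

def dbl (m : ℕ) (p : Fin m → Fin 3) : Fin (2 * m) → Fin 3 :=
  fun x => p ⟨(x : ℕ) / 2, by have := x.isLt; omega⟩

lemma dbl_e0 (p : Fin m → Fin 3) (k : Fin m) : dbl m p (e0 m k) = p k := by
  unfold dbl e0; congr 1; apply Fin.ext; show 2 * (k : ℕ) / 2 = k; omega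

lemma dbl_e1 (p : Fin m → Fin 3) (k : Fin m) : dbl m p (e1 m k) = p k := by
  unfold dbl e1; congr 1; apply Fin.ext; show (2 * (k : ℕ) + 1) / 2 = k; omega

lemma paired_dbl (p : Fin m → Fin 3) : paired m (dbl m p) = 1 := by
  unfold paired
  rw [Finset.prod_eq_one]
  intro k _
  rw [dbl_e0, dbl_e1, if_pos rfl]

lemma dbl_injective : Function.Injective (dbl m) := by
  intro p p' h
  funext k
  rw [← dbl_e0 p k, ← dbl_e0 p' k, h]

lemma mem_dbl_image_of_paired (j : Fin (2 * m) → Fin 3) (h : ∀ k, j (e0 m k) = j (e1 m k)) :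
    j ∈ univ.image (dbl m) := by
  refine mem_image.2 ⟨fun k => j (e0 m k), mem_univ _, ?_⟩
  funext x
  show j (e0 m ⟨(x : ℕ) / 2, by have := x.isLt; omega⟩) = j x
  rcases Nat.even_or_odd (x : ℕ) with he | ho
  · congr 1; apply Fin.ext
    show 2 * ((x:ℕ)/2) = (x:ℕ)
    obtain ⟨t, ht⟩ := he; omega
  · rw [h ⟨(x : ℕ) / 2, by have := x.isLt; omega⟩]
    congr 1; apply Fin.ext
    show 2 * ((x:ℕ)/2) + 1 = (x:ℕ)
    obtain ⟨t, ht⟩ := ho; omega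

lemma paired_eq_zero (j : Fin (2 * m) → Fin 3) (h : j ∉ univ.image (dbl m)) :
    paired m j = 0 := by
  have : ¬ ∀ k, j (e0 m k) = j (e1 m k) := fun hk => h (mem_dbl_image_of_paired j hk)
  push_neg at this
  obtain ⟨k, hk⟩ := this
  exact Finset.prod_eq_zero (mem_univ k) (if_neg hk)

lemma Msymm_comp (j : Fin (2 * m) → Fin 3) (τ : Perm (Fin (2 * m))) :
    Msymm m (j ∘ τ) = Msymm m j := by
  rw [Msymm_eq, Msymm_eq]
  congr 1
  rw [← Equiv.sum_comp (Equiv.mulLeft τ) (fun σ => paired m (j ∘ σ))]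
  apply Finset.sum_congr rfl
  intro σ _
  congr 1

lemma sum_sq_eq_sum_dbl :
    ∑ j : Fin (2 * m) → Fin 3, (Msymm m j) ^ 2 = ∑ p : Fin m → Fin 3, Msymm m (dbl m p) := by
  have step1 : ∀ σ : Perm (Fin (2 * m)),
      ∑ j : Fin (2 * m) → Fin 3, Msymm m j * paired m (j ∘ σ)
        = ∑ j : Fin (2 * m) → Fin 3, Msymm m j * paired m j := by
    intro σ
    refine (Fintype.sum_equiv (Equiv.arrowCongr σ (Equiv.refl (Fin 3)))
      (fun j => Msymm m j * paired m j) (fun j => Msymm m j * paired m (j ∘ σ)) ?_).symm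
    intro j
    show Msymm m j * paired m j = Msymm m (j ∘ ⇑σ⁻¹) * paired m ((j ∘ ⇑σ⁻¹) ∘ ⇑σ)
    rw [Msymm_comp j σ⁻¹]
    congr 2
    funext x
    simp
  calc ∑ j : Fin (2 * m) → Fin 3, (Msymm m j) ^ 2
      = ∑ j : Fin (2 * m) → Fin 3, Msymm m j *
          ((1 / ((2 * m)! : ℝ)) * ∑ σ : Perm (Fin (2 * m)), paired m (j ∘ σ)) := by
        apply Finset.sum_congr rfl; intro j _; rw [← Msymm_eq]; ring
    _ = (1 / ((2 * m)! : ℝ)) * ∑ j : Fin (2 * m) → Fin 3,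
          ∑ σ : Perm (Fin (2 * m)), Msymm m j * paired m (j ∘ σ) := by
        rw [Finset.mul_sum]
        apply Finset.sum_congr rfl; intro j _
        rw [← Finset.mul_sum]
        ring
    _ = (1 / ((2 * m)! : ℝ)) * ∑ σ : Perm (Fin (2 * m)),
          ∑ j : Fin (2 * m) → Fin 3, Msymm m j * paired m (j ∘ σ) := by
        rw [Finset.sum_comm]
    _ = (1 / ((2 * m)! : ℝ)) * ∑ _σ : Perm (Fin (2 * m)),
          ∑ j : Fin (2 * m) → Fin 3, Msymm m j * paired m j := by
        rw [Finset.sum_congr rfl (fun σ _ => step1 σ)]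
    _ = ∑ j : Fin (2 * m) → Fin 3, Msymm m j * paired m j := by
        rw [Finset.sum_const, Finset.card_univ, Fintype.card_perm, Fintype.card_fin,
          nsmul_eq_mul]
        rw [one_div, inv_mul_cancel_left₀]
        exact_mod_cast Nat.factorial_ne_zero (2 * m)
    _ = ∑ j ∈ univ.image (dbl m), Msymm m j * paired m j := by
        refine (Finset.sum_subset (Finset.subset_univ _) ?_).symm
        intro j _ hj
        rw [paired_eq_zero j hj, mul_zero]
    _ = ∑ p : Fin m → Fin 3, Msymm m (dbl m p) := by
        rw [Finset.sum_image (fun p _ p' _ h => dbl_injective h)]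
        apply Finset.sum_congr rfl
        intro p _
        rw [paired_dbl, mul_one]

lemma fc_dbl (p : Fin m → Fin 3) (c : Fin 3) : fc (dbl m p) c = 2 * fc p c := by
  rw [fc_eq_card, fc_eq_card]
  have e : {x : Fin (2*m) // dbl m p x = c} ≃ {k : Fin m // p k = c} × Fin 2 := {
    toFun := fun x => (⟨⟨(x.1 : ℕ)/2, by have := x.1.isLt; omega⟩, x.2⟩,
      ⟨(x.1 : ℕ) % 2, by omega⟩)
    invFun := fun ki =>
      ⟨⟨2 * ((ki.1.1 : ℕ)) + (ki.2 : ℕ), by have := ki.1.1.isLt; have := ki.2.isLt; omega⟩, by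
        show p ⟨(2 * ((ki.1.1 : ℕ)) + (ki.2 : ℕ)) / 2, _⟩ = c
        have h2 : (ki.2 : ℕ) < 2 := ki.2.isLt
        rw [show (⟨(2 * ((ki.1.1 : ℕ)) + (ki.2 : ℕ)) / 2, by
          have := ki.1.1.isLt; omega⟩ : Fin m) = ki.1.1 from
          Fin.ext (show (2 * ((ki.1.1 : ℕ)) + (ki.2 : ℕ)) / 2 = ((ki.1.1 : Fin m) : ℕ) by omega)]
        exact ki.1.2⟩
    left_inv := fun x => by
      apply Subtype.ext; apply Fin.ext
      show 2 * ((x.1 : ℕ)/2) + (x.1 : ℕ) % 2 = (x.1 : ℕ)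
      omega
    right_inv := fun ki => by
      have h2 : (ki.2 : ℕ) < 2 := ki.2.isLt
      ext
      · show (2 * ((ki.1.1 : ℕ)) + (ki.2 : ℕ)) / 2 = (ki.1.1 : ℕ); omega
      · show (2 * ((ki.1.1 : ℕ)) + (ki.2 : ℕ)) % 2 = (ki.2 : ℕ); omega }
  have := Fintype.card_congr e
  rw [Fintype.card_prod, Fintype.card_fin] at this
  omega

/-- number of p' with the same fiber counts as p -/
def cnt (p : Fin m → Fin 3) : ℕ :=
  (univ.filter (fun p' : Fin m → Fin 3 => ∀ c, fc p' c = fc p c)).card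

lemma Msymm_dbl (p : Fin m → Fin 3) :
    Msymm m (dbl m p)
      = ((∏ c, (2 * fc p c)! : ℕ) : ℝ) * (cnt p : ℝ) / (((2*m)! : ℕ) : ℝ) := by
  rw [Msymm_eq]
  have hcomp := Finset.sum_comp (s := (univ : Finset (Perm (Fin (2*m)))))
    (fun r => paired m r) (fun σ => dbl m p ∘ σ)
  rw [hcomp]
  have hfib : ∀ r ∈ univ.image (fun σ : Perm (Fin (2*m)) => dbl m p ∘ σ),
      (univ.filter (fun σ : Perm (Fin (2*m)) => dbl m p ∘ σ = r)).card
        = ∏ c, (2 * fc p c)! := by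
    intro r hr
    rw [card_fiber_perm (dbl m p) r hr]
    exact Finset.prod_congr rfl (fun c _ => by rw [fc_dbl])
  rw [Finset.sum_congr rfl (fun r hr => by rw [hfib r hr])]
  have hpind : ∀ r ∈ univ.image (fun σ : Perm (Fin (2*m)) => dbl m p ∘ σ),
      paired m r = if r ∈ univ.image (dbl m) then (1:ℝ) else 0 := by
    intro r _
    by_cases h : r ∈ univ.image (dbl m)
    · rw [if_pos h]
      obtain ⟨p', -, rfl⟩ := mem_image.1 h
      exact paired_dbl p'
    · rw [if_neg h]
      exact paired_eq_zero r h
  rw [Finset.sum_congr rfl (fun r hr => by rw [hpind r hr])]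
  rw [Finset.sum_congr rfl (fun r _ => nsmul_eq_mul (∏ c, (2 * fc p c)!)
    (if r ∈ univ.image (dbl m) then (1:ℝ) else 0))]
  rw [← Finset.mul_sum, Finset.sum_boole]
  have hset : (univ.image (fun σ : Perm (Fin (2*m)) => dbl m p ∘ σ)).filter
        (fun r => r ∈ univ.image (dbl m))
      = (univ.filter (fun p' : Fin m → Fin 3 => ∀ c, fc p' c = fc p c)).image (dbl m) := by
    ext r
    simp only [mem_filter, mem_image, mem_univ, true_and]
    constructor
    · rintro ⟨horb, p', rfl⟩
      refine ⟨p', fun c => ?_, rfl⟩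
      have h1 : dbl m p' ∈ univ.image (fun σ : Perm (Fin (2*m)) => dbl m p ∘ σ) := by
        rw [mem_image]; obtain ⟨σ, hσ⟩ := horb; exact ⟨σ, mem_univ σ, hσ⟩
      have h2 := (mem_orbit_iff_fc (dbl m p) (dbl m p')).1 h1 c
      rw [fc_dbl, fc_dbl] at h2
      omega
    · rintro ⟨p', hfc, rfl⟩
      constructor
      · have h1 : dbl m p' ∈ univ.image (fun σ : Perm (Fin (2*m)) => dbl m p ∘ σ) :=
          (mem_orbit_iff_fc (dbl m p) (dbl m p')).2
            (fun c => by rw [fc_dbl, fc_dbl, hfc c])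
        obtain ⟨σ, -, hσ⟩ := mem_image.1 h1
        exact ⟨σ, hσ⟩
      · exact ⟨p', rfl⟩
  rw [hset, Finset.card_image_of_injective _ dbl_injective]
  rw [← cnt]
  push_cast
  ring

local notation "cbn" => Nat.centralBinom

lemma cnt_filter_eq (p : Fin m → Fin 3) :
    (univ.filter (fun p' : Fin m → Fin 3 => ∀ c, fc p' c = fc p c))
      = univ.image (fun τ : Perm (Fin m) => p ∘ τ) := by
  ext p'
  rw [mem_orbit_iff_fc p p', mem_filter]
  simp

lemma cnt_mul_eq (p : Fin m → Fin 3) : cnt p * ∏ c, (fc p c)! = m ! := by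
  unfold cnt
  rw [cnt_filter_eq]
  have := orbit_card_mul p
  rwa [Fintype.card_fin] at this

lemma sum_fc_eq (p : Fin m → Fin 3) : ∑ c, fc p c = m := by
  have := Finset.card_eq_sum_card_fiberwise
    (f := p) (s := univ) (t := univ) (fun x _ => mem_univ _)
  rw [Finset.card_univ, Fintype.card_fin] at this
  exact this.symm

lemma exists_p (a : Fin 3 → ℕ) (ha : a 0 + a 1 + a 2 = m) :
    ∃ p : Fin m → Fin 3, (fun c => fc p c) = a := by
  set p : Fin m → Fin 3 :=
    fun k => if (k : ℕ) < a 0 then 0 else if (k : ℕ) < a 0 + a 1 then 1 else 2 with hp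
  have hval : ∀ (P : ℕ → Prop) [DecidablePred P],
      #(univ.filter (fun k : Fin m => P (k : ℕ))) = #((range m).filter P) := by
    intro P _
    have himg : (range m).filter P = (univ.filter (fun k : Fin m => P (k : ℕ))).image Fin.val := by
      ext x
      simp only [mem_image, mem_filter, mem_univ, true_and, mem_range]
      constructor
      · rintro ⟨hx, hP⟩
        exact ⟨⟨x, hx⟩, hP, rfl⟩
      · rintro ⟨k, hP, rfl⟩
        exact ⟨k.isLt, hP⟩
    rw [himg, Finset.card_image_of_injective _ Fin.val_injective]
  have h0 : fc p 0 = a 0 := by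
    unfold fc
    rw [Finset.filter_congr (q := fun k : Fin m => (k : ℕ) < a 0) (fun k _ => by
      show (if (k : ℕ) < a 0 then (0 : Fin 3) else if (k : ℕ) < a 0 + a 1 then 1 else 2) = 0
        ↔ (k : ℕ) < a 0
      split_ifs with h1 h2 <;> simp_all)]
    rw [hval (fun x => x < a 0)]
    rw [show (range m).filter (fun x => x < a 0) = range (a 0) by
      ext x; simp only [mem_filter, mem_range]; omega]
    exact card_range _
  have h1 : fc p 1 = a 1 := by
    unfold fc
    rw [Finset.filter_congr (q := fun k : Fin m => a 0 ≤ (k : ℕ) ∧ (k : ℕ) < a 0 + a 1)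
      (fun k _ => by
        show (if (k : ℕ) < a 0 then (0 : Fin 3) else if (k : ℕ) < a 0 + a 1 then 1 else 2) = 1
          ↔ a 0 ≤ (k : ℕ) ∧ (k : ℕ) < a 0 + a 1
        split_ifs with h1 h2 <;> simp_all <;> omega)]
    rw [hval (fun x => a 0 ≤ x ∧ x < a 0 + a 1)]
    rw [show (range m).filter (fun x => a 0 ≤ x ∧ x < a 0 + a 1) = Ico (a 0) (a 0 + a 1) by
      ext x; simp only [mem_filter, mem_range, mem_Ico]; omega]
    rw [Nat.card_Ico]; omega
  have h2 : fc p 2 = a 2 := by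
    unfold fc
    rw [Finset.filter_congr (q := fun k : Fin m => a 0 + a 1 ≤ (k : ℕ))
      (fun k _ => by
        show (if (k : ℕ) < a 0 then (0 : Fin 3) else if (k : ℕ) < a 0 + a 1 then 1 else 2) = 2
          ↔ a 0 + a 1 ≤ (k : ℕ)
        split_ifs with h1 h2 <;> simp_all <;> omega)]
    rw [hval (fun x => a 0 + a 1 ≤ x)]
    rw [show (range m).filter (fun x => a 0 + a 1 ≤ x) = Ico (a 0 + a 1) m by
      ext x; simp only [mem_filter, mem_range, mem_Ico]; omega]
    rw [Nat.card_Ico]; omega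
  refine ⟨p, funext fun c => ?_⟩
  fin_cases c
  · exact h0
  · exact h1
  · exact h2

lemma mem_imageκ (a : Fin 3 → ℕ) :
    a ∈ univ.image (fun p : Fin m → Fin 3 => (fun c => fc p c)) ↔ a 0 + a 1 + a 2 = m := by
  constructor
  · intro h
    obtain ⟨p, -, rfl⟩ := mem_image.1 h
    have := sum_fc_eq p
    rwa [Fin.sum_univ_three] at this
  · intro h
    obtain ⟨p, hp⟩ := exists_p a h
    exact mem_image.2 ⟨p, mem_univ _, hp⟩

lemma sum_cb_image :
    ∑ a ∈ univ.image (fun p : Fin m → Fin 3 => (fun c => fc p c)),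
        ∏ c, ((cbn (a c) : ℕ) : ℝ)
      = (2 * (m : ℝ) + 1) * ((cbn m : ℕ) : ℝ) := by
  rw [Finset.sum_nbij' (i := fun a : Fin 3 → ℕ => (⟨(a 0, a 1 + a 2), (a 1, a 2)⟩ :
        (_ : ℕ × ℕ) × (ℕ × ℕ)))
      (j := fun x : (_ : ℕ × ℕ) × (ℕ × ℕ) => ![x.1.1, x.2.1, x.2.2])
      (t := (Finset.HasAntidiagonal.antidiagonal m).sigma (fun x => Finset.HasAntidiagonal.antidiagonal x.2))
      (g := fun x => ((cbn x.1.1 : ℕ) : ℝ) * (((cbn x.2.1 : ℕ) : ℝ) * ((cbn x.2.2 : ℕ) : ℝ)))]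
  · rw [Finset.sum_sigma]
    have hinner : ∀ x ∈ Finset.HasAntidiagonal.antidiagonal m,
        ∑ y ∈ Finset.HasAntidiagonal.antidiagonal x.2,
          ((cbn x.1 : ℕ) : ℝ) * (((cbn y.1 : ℕ) : ℝ) * ((cbn y.2 : ℕ) : ℝ))
        = ((cbn x.1 : ℕ) : ℝ) * 4 ^ x.2 := by
      intro x _
      rw [← Finset.mul_sum]
      congr 1
      rw [Finset.Nat.sum_antidiagonal_eq_sum_range_succ_mk]
      exact cb_conv x.2
    rw [Finset.sum_congr rfl hinner]
    rw [Finset.Nat.sum_antidiagonal_eq_sum_range_succ_mk]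
    simp only
    rw [cb_four m]
  · intro a ha
    rw [mem_imageκ] at ha
    simp only [Finset.mem_sigma, Finset.HasAntidiagonal.mem_antidiagonal]
    exact ⟨by omega, by simp⟩
  · intro x hx
    simp only [Finset.mem_sigma, Finset.HasAntidiagonal.mem_antidiagonal] at hx
    rw [mem_imageκ]
    simp only [Matrix.cons_val_zero, Matrix.cons_val_one, Matrix.head_cons,
      Matrix.cons_val_two, Matrix.tail_cons]
    omega
  · intro a _
    funext c
    fin_cases c <;> simp
  · intro x hx
    simp only [Finset.mem_sigma, Finset.HasAntidiagonal.mem_antidiagonal] at hx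
    simp only [Matrix.cons_val_zero, Matrix.cons_val_one, Matrix.head_cons,
      Matrix.cons_val_two, Matrix.tail_cons]
    obtain ⟨⟨i, l⟩, ⟨j, k⟩⟩ := x
    simp only at hx ⊢
    obtain ⟨h1, h2⟩ := hx
    subst h2
    rfl
  · intro a _
    rw [Fin.prod_univ_three]
    ring

lemma cnt_eq_cntA (p : Fin m → Fin 3) :
    cnt p = #(univ.filter (fun p' : Fin m → Fin 3 => (fun c => fc p' c) = fun c => fc p c)) := by
  unfold cnt
  congr 1
  apply Finset.filter_congr
  intro p' _
  constructor
  · exact funext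
  · intro h c; exact congrFun h c

/-- The squared Frobenius norm of `M_α` equals `α + 1` for even `α = 2*m`. -/
theorem Msymm_sq_norm (m : ℕ) (hm : 0 < m) :
    ∑ j : Fin (2 * m) → Fin 3, (Msymm m j) ^ 2 = 2 * m + 1 := by
  classical
  set g : (Fin m → Fin 3) → (Fin 3 → ℕ) := fun p => (fun c => fc p c) with hg
  set f : (Fin 3 → ℕ) → ℝ := fun a =>
    ((∏ c, (2 * a c)! : ℕ) : ℝ) *
      ((#(univ.filter (fun p' : Fin m → Fin 3 => g p' = a)) : ℕ) : ℝ) / (((2*m)! : ℕ) : ℝ)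
    with hf
  have hstep : ∀ p ∈ (univ : Finset (Fin m → Fin 3)), Msymm m (dbl m p) = f (g p) := by
    intro p _
    rw [Msymm_dbl p, hf]
    simp only [hg]
    rw [← cnt_eq_cntA p]
  rw [sum_sq_eq_sum_dbl, Finset.sum_congr rfl hstep, Finset.sum_comp f g]
  have hC : ∀ a ∈ univ.image g,
      #(univ.filter (fun p => g p = a)) • f a
        = (∏ c, ((cbn (a c) : ℕ) : ℝ)) * (((m ! : ℕ) : ℝ)^2 / (((2*m)! : ℕ) : ℝ)) := by
    intro a ha
    obtain ⟨p, -, rfl⟩ := Finset.mem_image.1 ha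
    have hcard : #(univ.filter (fun p' => g p' = g p)) = cnt p := (cnt_eq_cntA p).symm
    rw [hcard, hf]
    simp only [hg]
    rw [← cnt_eq_cntA p]
    have hAF : (cnt p : ℝ) * (∏ c, ((fc p c)! : ℝ)) = ((m ! : ℕ) : ℝ) := by
      exact_mod_cast congrArg (Nat.cast (R := ℝ)) (cnt_mul_eq p)
    have hfacn : ∀ c : Fin 3, cbn (fc p c) * (fc p c)! * (fc p c)! = (2 * fc p c)! := by
      intro c
      have h := Nat.choose_mul_factorial_mul_factorial
        (show fc p c ≤ 2 * fc p c by omega)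
      rw [show 2 * fc p c - fc p c = fc p c by omega] at h
      rw [Nat.centralBinom_eq_two_mul_choose]
      exact h
    have hprod : ((∏ c, (2 * fc p c)! : ℕ) : ℝ)
        = (∏ c, ((cbn (fc p c) : ℕ) : ℝ)) * ((∏ c, ((fc p c)! : ℝ)))
            * (∏ c, ((fc p c)! : ℝ)) := by
      push_cast
      rw [← Finset.prod_mul_distrib, ← Finset.prod_mul_distrib]
      apply Finset.prod_congr rfl
      intro c _
      exact_mod_cast congrArg (Nat.cast (R := ℝ)) (hfacn c).symm
    rw [nsmul_eq_mul, hprod]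
    have h2m : (((2*m)! : ℕ) : ℝ) ≠ 0 := Nat.cast_ne_zero.2 (Nat.factorial_ne_zero _)
    field_simp
    linear_combination ((∏ c, ((cbn (fc p c) : ℕ) : ℝ)) *
      ((cnt p : ℝ) * (∏ c, ((fc p c)! : ℝ)) + ((m ! : ℕ) : ℝ))) * hAF
  rw [Finset.sum_congr rfl hC, ← Finset.sum_mul, sum_cb_image]
  have hcbm : (cbn m) * (m ! * m !) = (2*m)! := by
    have h := Nat.choose_mul_factorial_mul_factorial (show m ≤ 2 * m by omega)
    rw [show 2 * m - m = m by omega] at h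
    rw [Nat.centralBinom_eq_two_mul_choose]
    rw [← h]; ring
  have h2m : (((2*m)! : ℕ) : ℝ) ≠ 0 := Nat.cast_ne_zero.2 (Nat.factorial_ne_zero _)
  have : (((2*m)! : ℕ) : ℝ) = ((cbn m : ℕ) : ℝ) * (((m ! : ℕ) : ℝ) * ((m ! : ℕ) : ℝ)) := by
    rw [← hcbm]; push_cast; ring
  rw [this]
  have hmf : ((m ! : ℕ) : ℝ) ≠ 0 := Nat.cast_ne_zero.2 (Nat.factorial_ne_zero _)
  have hcb : ((cbn m : ℕ) : ℝ) ≠ 0 := Nat.cast_ne_zero.2 (Nat.centralBinom_ne_zero m)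
  field_simp
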